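/- The classic interval widening ∇ on the interval domain over ℤ is a strong widening operator: a ⊔ b ⊑ a ∇ b for all intervals a, b; a ∇ b = a whenever b ⊑ a; and for every increasing sequence a₁ ⊑ a₂ ⊑ … of intervals and every sequence (bᵢ)_{i≥1} of intervals with aᵢ ∇ bᵢ ⊑ a_{i+1} for all i ≥ 1, there exists i₀ ≥ 1 with bᵢ ⊑ aᵢ for all i ≥ i₀. -/

import Mathlib

/-- Extended integers `ℤ ∪ {−∞, +∞}`: lower bounds live in `ℤ ∪ {−∞}` (i.e. are `≠ ⊤`),
upper bounds live in `ℤ ∪ {+∞}` (i.e. are `≠ ⊥`). -/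
abbrev IntvEInt : Type := WithBot (WithTop ℤ)

/-- A non-empty interval `[lo, hi]` with `lo ∈ ℤ ∪ {−∞}`, `hi ∈ ℤ ∪ {+∞}` and `lo ≤ hi`. -/
structure NEIntv : Type where
  lo : IntvEInt
  hi : IntvEInt
  lo_le_hi : lo ≤ hi
  lo_ne_top : lo ≠ (⊤ : IntvEInt)
  hi_ne_bot : hi ≠ (⊥ : IntvEInt)

/-- The interval domain over `ℤ`: `⊥` together with all non-empty intervals. -/
inductive Intv : Type where
  | bot : Intv
  | iv : NEIntv → Intv

namespace Intv

/-- Interval inclusion order. -/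
def le : Intv → Intv → Prop
  | .bot, _ => True
  | .iv _, .bot => False
  | .iv a, .iv b => b.lo ≤ a.lo ∧ a.hi ≤ b.hi

/-- Join: the interval hull. -/
def sup : Intv → Intv → Intv
  | .bot, x => x
  | .iv a, .bot => .iv a
  | .iv a, .iv b =>
    .iv { lo := min a.lo b.lo
          hi := max a.hi b.hi
          lo_le_hi := le_trans (min_le_left _ _) (le_trans a.lo_le_hi (le_max_left _ _))
          lo_ne_top := by
            intro h
            rcases min_choice a.lo b.lo with h' | h'
            · exact a.lo_ne_top (h'.symm.trans h)
            · exact b.lo_ne_top (h'.symm.trans h)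
          hi_ne_bot := by
            intro h
            rcases max_choice a.hi b.hi with h' | h'
            · exact a.hi_ne_bot (h'.symm.trans h)
            · exact b.hi_ne_bot (h'.symm.trans h) }

/-- Meet: intersection, the empty intersection being represented by `⊥`. -/
noncomputable def inf : Intv → Intv → Intv
  | .bot, _ => .bot
  | .iv _, .bot => .bot
  | .iv a, .iv b =>
    if h : max a.lo b.lo ≤ min a.hi b.hi then
      .iv { lo := max a.lo b.lo
            hi := min a.hi b.hi
            lo_le_hi := h
            lo_ne_top := by
              intro hh
              rcases max_choice a.lo b.lo with h' | h'
              · exact a.lo_ne_top (h'.symm.trans hh)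
              · exact b.lo_ne_top (h'.symm.trans hh)
            hi_ne_bot := by
              intro hh
              rcases min_choice a.hi b.hi with h' | h'
              · exact a.hi_ne_bot (h'.symm.trans hh)
              · exact b.hi_ne_bot (h'.symm.trans hh) }
    else .bot

/-- The classic interval widening:
`⊥ ∇ x = x`, `x ∇ ⊥ = x`, and
`[l_a,u_a] ∇ [l_b,u_b] = [(if l_a ≤ l_b then l_a else −∞), (if u_a ≥ u_b then u_a else +∞)]`. -/
noncomputable def widen : Intv → Intv → Intv
  | .bot, x => x
  | .iv a, .bot => .iv a
  | .iv a, .iv b =>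
    .iv { lo := if a.lo ≤ b.lo then a.lo else (⊥ : IntvEInt)
          hi := if b.hi ≤ a.hi then a.hi else (⊤ : IntvEInt)
          lo_le_hi := by
            split <;> split <;>
              first
                | exact a.lo_le_hi
                | exact le_top
                | exact bot_le
          lo_ne_top := by
            split
            · exact a.lo_ne_top
            · exact bot_ne_top
          hi_ne_bot := by
            split
            · exact a.hi_ne_bot
            · exact top_ne_bot }

/-- The classic interval narrowing:
`x △ ⊥ = ⊥`, `⊥ △ x = ⊥`, and
`[l_a,u_a] △ [l_b,u_b] = [(if l_a ≠ −∞ then l_a else l_b), (if u_a ≠ +∞ then u_a else u_b)]`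
(an empty result being represented by `⊥`). -/
noncomputable def narrow : Intv → Intv → Intv
  | _, .bot => .bot
  | .bot, _ => .bot
  | .iv a, .iv b =>
    if h : (if a.lo = (⊥ : IntvEInt) then b.lo else a.lo) ≤
           (if a.hi = (⊤ : IntvEInt) then b.hi else a.hi) then
      .iv { lo := if a.lo = (⊥ : IntvEInt) then b.lo else a.lo
            hi := if a.hi = (⊤ : IntvEInt) then b.hi else a.hi
            lo_le_hi := h
            lo_ne_top := by
              split
              · exact b.lo_ne_top
              · exact a.lo_ne_top
            hi_ne_bot := by
              split
              · exact b.hi_ne_bot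
              · exact a.hi_ne_bot }
    else .bot

end Intv

/-- The classic interval widening is a *strong* widening operator:
(i) it subsumes the join, (ii) `a ∇ b = a` whenever `b ⊑ a`, and (iii) for every increasing
sequence `a₁ ⊑ a₂ ⊑ …` of intervals and every sequence `bᵢ` with `aᵢ ∇ bᵢ ⊑ a_{i+1}` for
all `i ≥ 1`, there is `i₀ ≥ 1` with `bᵢ ⊑ aᵢ` for all `i ≥ i₀`. -/
theorem interval_widen_is_strong_widening :
    (∀ a b : Intv, (Intv.sup a b).le (Intv.widen a b)) ∧
    (∀ a b : Intv, b.le a → Intv.widen a b = a) ∧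
    (∀ (a b : ℕ → Intv), (∀ i, 1 ≤ i → (a i).le (a (i + 1))) →
      (∀ i, 1 ≤ i → (Intv.widen (a i) (b i)).le (a (i + 1))) →
      ∃ i₀, 1 ≤ i₀ ∧ ∀ i, i₀ ≤ i → (b i).le (a i)) := by

  refine ⟨?_, ?_, ?_⟩
  · -- (i) sup ⊑ widen
    intro a b
    cases a with
    | bot => cases b with
      | bot => trivial
      | iv y => exact ⟨le_refl _, le_refl _⟩
    | iv x => cases b with
      | bot => exact ⟨le_refl _, le_refl _⟩
      | iv y =>
        constructor
        · by_cases h : x.lo ≤ y.lo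
          · simp [h, min_eq_left h]
          · simp [h]
        · by_cases h : y.hi ≤ x.hi
          · simp [h, max_eq_left h]
          · simp [h]
  · -- (ii) b ⊑ a → a ∇ b = a
    intro a b hle
    cases a with
    | bot => cases b with
      | bot => rfl
      | iv y => exact absurd hle (by simp [Intv.le])
    | iv x => cases b with
      | bot => rfl
      | iv y =>
        obtain ⟨h1, h2⟩ := hle
        cases x with
        | mk lo hi h3 h4 h5 => simp [Intv.widen, h1, h2]
  · -- (iii) eventual stabilization
    intro a b ha hw
    -- propagation lemmas
    have hiv : ∀ i, 1 ≤ i → (∃ x, a i = .iv x) → ∀ j, i ≤ j → ∃ x, a j = .iv x := by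
      intro i hi hx j hj
      induction j, hj using Nat.le_induction with
      | base => exact hx
      | succ n hn ih =>
        obtain ⟨x, hx⟩ := ih
        have := ha n (le_trans hi hn)
        rw [hx] at this
        cases h : a (n + 1) with
        | bot => rw [h] at this; exact absurd this (by simp [Intv.le])
        | iv z => exact ⟨z, rfl⟩
    have hlo : ∀ i, 1 ≤ i → (∃ x, a i = .iv x ∧ x.lo = ⊥) → ∀ j, i ≤ j →
        ∃ x, a j = .iv x ∧ x.lo = ⊥ := by
      intro i hi hx j hj
      induction j, hj using Nat.le_induction with
      | base => exact hx
      | succ n hn ih =>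
        obtain ⟨x, hx, hxlo⟩ := ih
        have := ha n (le_trans hi hn)
        rw [hx] at this
        cases h : a (n + 1) with
        | bot => rw [h] at this; exact absurd this (by simp [Intv.le])
        | iv z =>
          rw [h] at this
          refine ⟨z, rfl, ?_⟩
          have : z.lo ≤ x.lo := this.1
          rw [hxlo] at this
          exact le_bot_iff.mp this
    have hhi : ∀ i, 1 ≤ i → (∃ x, a i = .iv x ∧ x.hi = ⊤) → ∀ j, i ≤ j →
        ∃ x, a j = .iv x ∧ x.hi = ⊤ := by
      intro i hi hx j hj
      induction j, hj using Nat.le_induction with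
      | base => exact hx
      | succ n hn ih =>
        obtain ⟨x, hx, hxhi⟩ := ih
        have := ha n (le_trans hi hn)
        rw [hx] at this
        cases h : a (n + 1) with
        | bot => rw [h] at this; exact absurd this (by simp [Intv.le])
        | iv z =>
          rw [h] at this
          refine ⟨z, rfl, ?_⟩
          have : x.hi ≤ z.hi := this.2
          rw [hxhi] at this
          exact top_le_iff.mp this
    have keyL : ∀ i, 1 ≤ i → ∀ x y, a i = .iv x → b i = .iv y → ¬ x.lo ≤ y.lo →
        ∃ z, a (i + 1) = .iv z ∧ z.lo = ⊥ := by
      intro i hi x y hx hy hfail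
      have hwle := hw i hi
      rw [hx, hy] at hwle
      simp only [Intv.widen] at hwle
      cases h : a (i + 1) with
      | bot => rw [h] at hwle; exact absurd hwle (by simp [Intv.le])
      | iv z =>
        rw [h] at hwle
        refine ⟨z, rfl, ?_⟩
        have := hwle.1
        simp only [if_neg hfail] at this
        exact le_bot_iff.mp this
    have keyH : ∀ i, 1 ≤ i → ∀ x y, a i = .iv x → b i = .iv y → ¬ y.hi ≤ x.hi →
        ∃ z, a (i + 1) = .iv z ∧ z.hi = ⊤ := by
      intro i hi x y hx hy hfail
      have hwle := hw i hi
      rw [hx, hy] at hwle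
      simp only [Intv.widen] at hwle
      cases h : a (i + 1) with
      | bot => rw [h] at hwle; exact absurd hwle (by simp [Intv.le])
      | iv z =>
        rw [h] at hwle
        refine ⟨z, rfl, ?_⟩
        have := hwle.2
        simp only [if_neg hfail] at this
        exact top_le_iff.mp this
    by_cases hA : ∃ k, 1 ≤ k ∧ ∃ x, a k = Intv.iv x
    · obtain ⟨k, hk1, hkx⟩ := hA
      by_cases hL : ∃ i, k ≤ i ∧ ∃ x y, a i = Intv.iv x ∧ b i = Intv.iv y ∧ ¬ x.lo ≤ y.lo
      · obtain ⟨i₁, hi₁k, x₁, y₁, hax₁, hby₁, hf₁⟩ := hL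
        have hk1' : 1 ≤ i₁ := le_trans hk1 hi₁k
        have hlo₁ : ∀ j, i₁ + 1 ≤ j → ∃ x, a j = Intv.iv x ∧ x.lo = ⊥ :=
          hlo (i₁ + 1) (by omega) (keyL i₁ hk1' x₁ y₁ hax₁ hby₁ hf₁)
        by_cases hH : ∃ i, k ≤ i ∧ ∃ x y, a i = Intv.iv x ∧ b i = Intv.iv y ∧ ¬ y.hi ≤ x.hi
        · obtain ⟨i₂, hi₂k, x₂, y₂, hax₂, hby₂, hf₂⟩ := hH
          have hk2' : 1 ≤ i₂ := le_trans hk1 hi₂k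
          have hhi₂ : ∀ j, i₂ + 1 ≤ j → ∃ x, a j = Intv.iv x ∧ x.hi = ⊤ :=
            hhi (i₂ + 1) (by omega) (keyH i₂ hk2' x₂ y₂ hax₂ hby₂ hf₂)
          refine ⟨max (i₁ + 1) (i₂ + 1), by omega, ?_⟩
          intro i hi
          obtain ⟨z, hz, hzlo⟩ := hlo₁ i (le_trans (le_max_left _ _) hi)
          obtain ⟨z', hz', hzhi⟩ := hhi₂ i (le_trans (le_max_right _ _) hi)
          rw [hz'] at hz
          injection hz with hzz
          subst hzz
          cases hb : b i with
          | bot => trivial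
          | iv y =>
            rw [hz']
            exact ⟨by rw [hzlo]; exact bot_le, by rw [hzhi]; exact le_top⟩
        · push_neg at hH
          refine ⟨i₁ + 1, by omega, ?_⟩
          intro i hi
          obtain ⟨z, hz, hzlo⟩ := hlo₁ i hi
          cases hb : b i with
          | bot => trivial
          | iv y =>
            rw [hz]
            exact ⟨by rw [hzlo]; exact bot_le, hH i (by omega) z y hz hb⟩
      · push_neg at hL
        by_cases hH : ∃ i, k ≤ i ∧ ∃ x y, a i = Intv.iv x ∧ b i = Intv.iv y ∧ ¬ y.hi ≤ x.hi
        · obtain ⟨i₂, hi₂k, x₂, y₂, hax₂, hby₂, hf₂⟩ := hH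
          have hk2' : 1 ≤ i₂ := le_trans hk1 hi₂k
          have hhi₂ : ∀ j, i₂ + 1 ≤ j → ∃ x, a j = Intv.iv x ∧ x.hi = ⊤ :=
            hhi (i₂ + 1) (by omega) (keyH i₂ hk2' x₂ y₂ hax₂ hby₂ hf₂)
          refine ⟨i₂ + 1, by omega, ?_⟩
          intro i hi
          obtain ⟨z, hz, hzhi⟩ := hhi₂ i hi
          cases hb : b i with
          | bot => trivial
          | iv y =>
            rw [hz]
            exact ⟨hL i (by omega) z y hz hb, by rw [hzhi]; exact le_top⟩
        · push_neg at hH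
          refine ⟨k, hk1, ?_⟩
          intro i hi
          obtain ⟨z, hz⟩ := hiv k hk1 hkx i hi
          cases hb : b i with
          | bot => trivial
          | iv y =>
            rw [hz]
            exact ⟨hL i hi z y hz hb, hH i hi z y hz hb⟩
    · push_neg at hA
      refine ⟨1, le_refl _, ?_⟩
      intro i hi
      have hbot : ∀ j, 1 ≤ j → a j = Intv.bot := by
        intro j hj
        cases h : a j with
        | bot => rfl
        | iv x => exact absurd h (hA j hj x)
      have hwle := hw i hi
      rw [hbot i hi, hbot (i + 1) (by omega)] at hwle
      cases hb : b i with
      | bot => trivial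
      | iv y =>
        rw [hb] at hwle
        simp only [Intv.widen] at hwle
        exact absurd hwle (by simp [Intv.le])
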